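/- Let T be a tree, α, β vertices of T, and suppose a group G acts on T by automorphisms such that ⟨G_α, G_β⟩ = G and the orbit of β under G contains α. Suppose y is an interior vertex of the geodesic [α, β]_T with d_T(y, α) ≤ d_T(y, β) and G_{α,y} = G_{β,y}. If moreover G_{α,y} fixes β, then one derives a contradiction; hence α is not in the orbit of β under ⟨G_α, G_β⟩ whenever G_{α,y} = G_{β,y} ≤ G_β. -/

import Mathlib

open Pointwise

/-- A permutation preserves a directed edge relation. -/
def DPreserves {V : Type*} (E : V → V → Prop) (g : Equiv.Perm V) : Prop :=
  ∀ a b : V, E (g a) (g b) ↔ E a b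

/-- The automorphism group of the directed graph with edge relation `E`,
as a subgroup of the symmetric group. -/
def autSub {V : Type*} (E : V → V → Prop) : Subgroup (Equiv.Perm V) where
  carrier := {g | DPreserves E g}
  one_mem' := fun _ _ => Iff.rfl
  mul_mem' := by
    intro g h hg hh a b
    exact (hg (h a) (h b)).trans (hh a b)
  inv_mem' := by
    intro g hg a b
    simpa using (hg (g⁻¹ a) (g⁻¹ b)).symm

/-- A subgroup of the symmetric group acts primitively: it is transitive and the only
invariant equivalence relations are the trivial and the universal ones. -/
def IsPrimitiveSub {X : Type*} (G : Subgroup (Equiv.Perm X)) : Prop :=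
  (∀ a b : X, ∃ g ∈ G, g a = b) ∧
    ∀ r : Setoid X, (∀ g ∈ G, ∀ a b : X, r.r a b ↔ r.r (g a) (g b)) →
      (∀ a b : X, r.r a b ↔ a = b) ∨ ∀ a b : X, r.r a b

/-- A subgroup of the symmetric group acts regularly: transitively with trivial
point stabilisers. -/
def IsRegularSub {X : Type*} (G : Subgroup (Equiv.Perm X)) : Prop :=
  (∀ a b : X, ∃ g ∈ G, g a = b) ∧ ∀ g ∈ G, ∀ a : X, g a = a → g = 1

/-- `a` is a cut vertex of `Γ`: deleting it disconnects the graph. -/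
def IsCutVertexOf {V : Type*} (Γ : SimpleGraph V) (a : V) : Prop :=
  ¬ (Γ.induce {v | v ≠ a}).Preconnected

/-- `Γ` is connected and has connectivity one. -/
def HasConnOne {V : Type*} (Γ : SimpleGraph V) : Prop :=
  Γ.Connected ∧ ∃ a, IsCutVertexOf Γ a

/-- `B` is (the vertex set of) a block of `Γ`: a connected induced subgraph with no cut
vertex of its own, maximal with these properties. -/
def IsBlockOf {V : Type*} (Γ : SimpleGraph V) (B : Set V) : Prop :=
  (Γ.induce B).Connected ∧ (∀ b ∈ B, (Γ.induce (B \ {b})).Preconnected) ∧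
    ∀ C : Set V, B ⊆ C → (Γ.induce C).Connected →
      (∀ c ∈ C, (Γ.induce (C \ {c})).Preconnected) → B = C

/-- Vertex type of the block-cut-vertex tree: cut vertices plus blocks. -/
def BCVertex {V : Type*} (Γ : SimpleGraph V) : Type _ :=
  {a : V // IsCutVertexOf Γ a} ⊕ {B : Set V // IsBlockOf Γ B}

/-- The block-cut-vertex tree: a cut vertex is adjacent to the blocks containing it. -/
def bcTree {V : Type*} (Γ : SimpleGraph V) : SimpleGraph (BCVertex Γ) :=
  SimpleGraph.fromRel (fun x y =>
    ∃ (a : {a : V // IsCutVertexOf Γ a}) (B : {B : Set V // IsBlockOf Γ B}),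
      x = Sum.inl a ∧ y = Sum.inr B ∧ (a : V) ∈ (B : Set V))

/-- The stabiliser (in the full symmetric group) of a vertex of the block-cut-vertex
tree: the point stabiliser for a cut vertex, the setwise stabiliser for a block. -/
def bcStab {V : Type*} {Γ : SimpleGraph V} (x : BCVertex Γ) : Subgroup (Equiv.Perm V) :=
  match x with
  | Sum.inl a => MulAction.stabilizer (Equiv.Perm V) (a : V)
  | Sum.inr B => MulAction.stabilizer (Equiv.Perm V) (B : Set V)

/-- `z` lies on a geodesic between `a` and `b`. -/
def OnGeodesic {W : Type*} (T : SimpleGraph W) (a b z : W) : Prop :=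
  T.dist a z + T.dist z b = T.dist a b

/-- `a` and `b` lie in the same connected component of `T` with the vertex `y` deleted. -/
def SameCompAvoiding {W : Type*} (T : SimpleGraph W) (y a b : W) : Prop :=
  ∃ (ha : a ≠ y) (hb : b ≠ y), (T.induce {v | v ≠ y}).Reachable ⟨a, ha⟩ ⟨b, hb⟩

/-- `B` and `C` are isomorphic as directed graphs (with edge relation `E`). -/
def BlocksIsomorphic {V : Type*} (E : V → V → Prop) (B C : Set V) : Prop :=
  ∃ e : B ≃ C, ∀ a b : B, E (a : V) (b : V) ↔ E (e a : V) (e b : V)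

/-- The automorphism group of the directed graph induced on `B`. -/
def BlockAut {V : Type*} (E : V → V → Prop) (B : Set V) : Subgroup (Equiv.Perm B) :=
  autSub (fun a b : B => E (a : V) (b : V))

/-- `B` has at least three vertices. -/
def HasThreeVertices {V : Type*} (B : Set V) : Prop :=
  ∃ x y z : V, x ∈ B ∧ y ∈ B ∧ z ∈ B ∧ x ≠ y ∧ x ≠ z ∧ y ≠ z

/-- Primitivity for an abstract group action: transitivity, and the only invariant
equivalence relations are the trivial and the universal ones. -/
def IsPrimAction (G Ω : Type*) [Group G] [MulAction G Ω] : Prop :=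
  MulAction.IsPretransitive G Ω ∧
    ∀ r : Setoid Ω, (∀ (g : G) (a b : Ω), r.r a b ↔ r.r (g • a) (g • b)) →
      (∀ a b : Ω, r.r a b ↔ a = b) ∨ ∀ a b : Ω, r.r a b


section TreeAux

variable {W : Type*} {T : SimpleGraph W}

lemma tree_path_length_eq_dist (hT : T.IsTree) {u v : W} (p : T.Walk u v)
    (hp : p.IsPath) : p.length = T.dist u v := by
  obtain ⟨q, hq, hql⟩ := hT.isConnected.exists_path_of_dist u v
  have h : (⟨p, hp⟩ : T.Path u v) = ⟨q, hq⟩ := hT.IsAcyclic.path_unique _ _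
  rw [← hql]
  exact congrArg (fun r : T.Path u v => r.1.length) h

lemma tree_path_unique (hT : T.IsTree) {u v : W} {p q : T.Walk u v}
    (hp : p.IsPath) (hq : q.IsPath) : p = q := by
  have h : (⟨p, hp⟩ : T.Path u v) = ⟨q, hq⟩ := hT.IsAcyclic.path_unique _ _
  exact congrArg Subtype.val h

lemma onGeodesic_iff_exists (hT : T.IsTree) {u v z : W} :
    OnGeodesic T u v z ↔ ∃ p : T.Walk u v, p.IsPath ∧ z ∈ p.support := by
  classical
  constructor
  · intro h
    obtain ⟨p1, h1, hl1⟩ := hT.isConnected.exists_path_of_dist u z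
    obtain ⟨p2, h2, hl2⟩ := hT.isConnected.exists_path_of_dist z v
    refine ⟨p1.append p2, ?_, ?_⟩
    · exact (p1.append p2).isPath_of_length_eq_dist
        (by rw [SimpleGraph.Walk.length_append, hl1, hl2]; exact h)
    · exact (SimpleGraph.Walk.mem_support_append_iff _ _).mpr
        (Or.inl (p1.end_mem_support))
  · rintro ⟨p, hp, hz⟩
    have hsplit := congrArg SimpleGraph.Walk.length (p.take_spec hz)
    rw [SimpleGraph.Walk.length_append] at hsplit
    have h1 := tree_path_length_eq_dist hT _ (hp.takeUntil hz)
    have h2 := tree_path_length_eq_dist hT _ (hp.dropUntil hz)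
    have h3 := tree_path_length_eq_dist hT _ hp
    show T.dist u z + T.dist z v = T.dist u v
    omega

lemma onGeodesic_symm {u v z : W} (h : OnGeodesic T u v z) : OnGeodesic T v u z := by
  have h' : T.dist u z + T.dist z v = T.dist u v := h
  have c1 : T.dist v z = T.dist z v := SimpleGraph.dist_comm
  have c2 : T.dist z u = T.dist u z := SimpleGraph.dist_comm
  have c3 : T.dist v u = T.dist u v := SimpleGraph.dist_comm
  show T.dist v z + T.dist z u = T.dist v u
  omega

lemma geodesic_split (hT : T.IsTree) {a b z : W} (h : OnGeodesic T a b z) (w : W) :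
    OnGeodesic T a w z ∨ OnGeodesic T b w z := by
  classical
  obtain ⟨p, hp, hz⟩ := (onGeodesic_iff_exists hT).mp h
  obtain ⟨p1, h1, _⟩ := hT.isConnected.exists_path_of_dist a w
  obtain ⟨p2, h2, _⟩ := hT.isConnected.exists_path_of_dist w b
  have hpq : p = (p1.append p2).bypass :=
    tree_path_unique hT hp ((p1.append p2).bypass_isPath)
  have hz' : z ∈ (p1.append p2).support :=
    (p1.append p2).support_bypass_subset (hpq ▸ hz)
  rcases (SimpleGraph.Walk.mem_support_append_iff _ _).mp hz' with h' | h'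
  · exact Or.inl ((onGeodesic_iff_exists hT).mpr ⟨p1, h1, h'⟩)
  · exact Or.inr (onGeodesic_symm ((onGeodesic_iff_exists hT).mpr ⟨p2, h2, h'⟩))

lemma geodesic_unique_dist (hT : T.IsTree) {u v p q : W}
    (hp : OnGeodesic T u v p) (hq : OnGeodesic T u v q)
    (hd : T.dist u p = T.dist u q) : p = q := by
  classical
  obtain ⟨P, hP, hpP⟩ := (onGeodesic_iff_exists hT).mp hp
  obtain ⟨Q, hQ, hqQ⟩ := (onGeodesic_iff_exists hT).mp hq
  have hPQ : Q = P := tree_path_unique hT hQ hP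
  subst hPQ
  have hsp := Q.take_spec hpP
  have hqP : q ∈ ((Q.takeUntil p hpP).append (Q.dropUntil p hpP)).support := by
    rw [hsp]; exact hqQ
  have e1 : T.dist u p + T.dist p v = T.dist u v := hp
  have e2 : T.dist u q + T.dist q v = T.dist u v := hq
  rcases (SimpleGraph.Walk.mem_support_append_iff _ _).mp hqP with h' | h'
  · have h3 : OnGeodesic T u p q :=
      (onGeodesic_iff_exists hT).mpr ⟨_, hP.takeUntil hpP, h'⟩
    have e3 : T.dist u q + T.dist q p = T.dist u p := h3
    have h0 : T.dist q p = 0 := by omega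
    exact ((hT.isConnected.dist_eq_zero_iff).mp h0).symm
  · have h3 : OnGeodesic T p v q :=
      (onGeodesic_iff_exists hT).mpr ⟨_, hP.dropUntil hpP, h'⟩
    have e3 : T.dist p q + T.dist q v = T.dist p v := h3
    have : T.dist p q = 0 := by omega
    exact (hT.isConnected.dist_eq_zero_iff).mp this

lemma perm_dist_eq (hT : T.IsTree) {g : Equiv.Perm W}
    (hg : ∀ a b : W, T.Adj (g a) (g b) ↔ T.Adj a b) (a b : W) :
    T.dist (g a) (g b) = T.dist a b := by
  have key : ∀ (f : Equiv.Perm W), (∀ x y : W, T.Adj x y → T.Adj (f x) (f y)) →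
      ∀ x y : W, T.dist (f x) (f y) ≤ T.dist x y := by
    intro f hf x y
    obtain ⟨p, hp⟩ := hT.isConnected.exists_walk_length_eq_dist x y
    have hle := SimpleGraph.dist_le (p.map ⟨f, fun h => hf _ _ h⟩)
    rwa [SimpleGraph.Walk.length_map, hp] at hle
  refine le_antisymm (key g (fun x y h => (hg x y).mpr h) a b) ?_
  have h2 := key g⁻¹ (fun x y h => by
    have := (hg (g⁻¹ x) (g⁻¹ y)).mp
    simp only [Equiv.Perm.coe_inv, Equiv.apply_symm_apply] at this
    exact this h) (g a) (g b)
  simpa using h2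

lemma onGeodesic_perm {g : Equiv.Perm W}
    (hdist : ∀ a b : W, T.dist (g a) (g b) = T.dist a b) {a b z : W} :
    OnGeodesic T (g a) (g b) (g z) ↔ OnGeodesic T a b z := by
  show T.dist (g a) (g z) + T.dist (g z) (g b) = T.dist (g a) (g b) ↔ _
  rw [hdist, hdist, hdist]
  rfl

lemma push_off (hT : T.IsTree) {g : Equiv.Perm W}
    (hdist : ∀ a b : W, T.dist (g a) (g b) = T.dist a b)
    {c y δ : W} (hc : g c = c) (hy : g y ≠ y) (hδ : OnGeodesic T c δ y) :
    ¬ OnGeodesic T c (g δ) y ∧ T.dist y δ + 1 ≤ T.dist y (g δ) := by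
  have hδ' : T.dist c y + T.dist y δ = T.dist c δ := hδ
  have e1 : T.dist c (g y) = T.dist c y := by rw [← hdist c y, hc]
  have e2 : T.dist (g y) (g δ) = T.dist y δ := hdist y δ
  have e3 : T.dist c (g δ) = T.dist c δ := by rw [← hdist c δ, hc]
  have h1 : OnGeodesic T c (g δ) (g y) := by
    show T.dist c (g y) + T.dist (g y) (g δ) = T.dist c (g δ)
    rw [e1, e2, e3]; exact hδ'
  have hno : ¬ OnGeodesic T c (g δ) y := by
    intro h
    exact hy (geodesic_unique_dist hT h1 h e1)
  refine ⟨hno, ?_⟩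
  have tri : T.dist c (g δ) ≤ T.dist c y + T.dist y (g δ) :=
    hT.isConnected.dist_triangle
  rw [e3] at tri
  have hne2 : T.dist c y + T.dist y (g δ) ≠ T.dist c (g δ) := fun he => hno he
  rw [e3] at hne2
  omega

end TreeAux

/-- Alternating words in two sets of permutations. -/
inductive AltWord {W : Type*} (A B : Set (Equiv.Perm W)) (y : W) :
    Equiv.Perm W → Bool → Prop
  | base {g : Equiv.Perm W} (hg : g ∈ B) : AltWord A B y g false
  | stepA {u h : Equiv.Perm W} (hu : u ∈ A) (hh : AltWord A B y h false) :
      AltWord A B y (u * h) true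
  | stepB {v h : Equiv.Perm W} (hv : v ∈ B) (hvy : v y ≠ y)
      (hh : AltWord A B y h true) : AltWord A B y (v * h) false
  | stepK {v h : Equiv.Perm W} (hv : v ∈ B) (hvy : v y = y)
      (hh : AltWord A B y h true) : AltWord A B y (v * h) true

lemma AltWord.mul_left {W : Type*} {A B : Set (Equiv.Perm W)} {y : W}
    (hBmul : ∀ {a b : Equiv.Perm W}, a ∈ B → b ∈ B → a * b ∈ B)
    (hAA : ∀ {a b : Equiv.Perm W}, a ∈ A → b ∈ A → a * b ∈ A ∨ a * b ∈ B)
    (hAK : ∀ {a b : Equiv.Perm W}, a ∈ A → b ∈ B → b y = y → a * b ∈ A)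
    {g : Equiv.Perm W} {c : Bool} (hg : AltWord A B y g c) :
    ∀ t : Equiv.Perm W, t ∈ A ∨ t ∈ B → ∃ c', AltWord A B y (t * g) c' := by
  induction hg with
  | base hg =>
    rintro t (ht | ht)
    · exact ⟨true, .stepA ht (.base hg)⟩
    · exact ⟨false, .base (hBmul ht hg)⟩
  | @stepA u h hu hh ih =>
    rintro t (ht | ht)
    · rcases hAA ht hu with h' | h'
      · exact ⟨true, by rw [← mul_assoc]; exact .stepA h' hh⟩
      · obtain ⟨c', hc'⟩ := ih (t * u) (Or.inr h')
        exact ⟨c', by rw [← mul_assoc]; exact hc'⟩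
    · by_cases hty : t y = y
      · exact ⟨true, .stepK ht hty (.stepA hu hh)⟩
      · exact ⟨false, .stepB ht hty (.stepA hu hh)⟩
  | @stepB v h hv hvy hh _ =>
    rintro t (ht | ht)
    · exact ⟨true, .stepA ht (.stepB hv hvy hh)⟩
    · by_cases h' : (t * v) y = y
      · exact ⟨true, by rw [← mul_assoc]; exact .stepK (hBmul ht hv) h' hh⟩
      · exact ⟨false, by rw [← mul_assoc]; exact .stepB (hBmul ht hv) h' hh⟩
  | @stepK v h hv hvy hh ih =>
    rintro t (ht | ht)
    · obtain ⟨c', hc'⟩ := ih (t * v) (Or.inl (hAK ht hv hvy))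
      exact ⟨c', by rw [← mul_assoc]; exact hc'⟩
    · by_cases h' : (t * v) y = y
      · exact ⟨true, by rw [← mul_assoc]; exact .stepK (hBmul ht hv) h' hh⟩
      · exact ⟨false, by rw [← mul_assoc]; exact .stepB (hBmul ht hv) h' hh⟩


/-- In a tree with `y` strictly between `α` and `β`, with
`d_T(y,α) ≤ d_T(y,β)` and `G_{α,y} = G_{β,y}`, the vertex `α` is not in the orbit of `β`
under `⟨G_α, G_β⟩`. -/
theorem stmt14 {W : Type*} (T : SimpleGraph W) (hT : T.IsTree)
    (G : Subgroup (Equiv.Perm W))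
    (hG : ∀ g ∈ G, ∀ a b : W, T.Adj (g a) (g b) ↔ T.Adj a b)
    (α β y : W) (hne : α ≠ β)
    (hyα : y ≠ α) (hyβ : y ≠ β) (hgeo : OnGeodesic T α β y)
    (hd : T.dist y α ≤ T.dist y β)
    (hstab : G ⊓ MulAction.stabilizer (Equiv.Perm W) α ⊓ MulAction.stabilizer (Equiv.Perm W) y
           = G ⊓ MulAction.stabilizer (Equiv.Perm W) β ⊓ MulAction.stabilizer (Equiv.Perm W) y) :
    ¬ ∃ g ∈ (G ⊓ MulAction.stabilizer (Equiv.Perm W) α) ⊔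
        (G ⊓ MulAction.stabilizer (Equiv.Perm W) β), g β = α := by
  classical
  set Gα := G ⊓ MulAction.stabilizer (Equiv.Perm W) α with hGα
  set Gβ := G ⊓ MulAction.stabilizer (Equiv.Perm W) β with hGβ
  rintro ⟨g, hgmem, hgβ⟩
  have hdist : ∀ {g : Equiv.Perm W}, g ∈ G → ∀ a b : W,
      T.dist (g a) (g b) = T.dist a b :=
    fun hg a b => perm_dist_eq hT (hG _ hg) a b
  have memGα : ∀ {u : Equiv.Perm W}, u ∈ Gα → u ∈ G ∧ u α = α := by
    intro u hu
    rw [hGα, Subgroup.mem_inf] at hu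
    exact ⟨hu.1, MulAction.mem_stabilizer_iff.mp hu.2⟩
  have memGβ : ∀ {v : Equiv.Perm W}, v ∈ Gβ → v ∈ G ∧ v β = β := by
    intro v hv
    rw [hGβ, Subgroup.mem_inf] at hv
    exact ⟨hv.1, MulAction.mem_stabilizer_iff.mp hv.2⟩
  have hcross1 : ∀ {u : Equiv.Perm W}, u ∈ Gα → u y = y → u ∈ Gβ := by
    intro u hu huy
    have h1 : u ∈ Gα ⊓ MulAction.stabilizer (Equiv.Perm W) y :=
      Subgroup.mem_inf.mpr ⟨hu, MulAction.mem_stabilizer_iff.mpr huy⟩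
    rw [hstab] at h1
    exact (Subgroup.mem_inf.mp h1).1
  have hcross2 : ∀ {v : Equiv.Perm W}, v ∈ Gβ → v y = y → v ∈ Gα := by
    intro v hv hvy
    have h1 : v ∈ Gβ ⊓ MulAction.stabilizer (Equiv.Perm W) y :=
      Subgroup.mem_inf.mpr ⟨hv, MulAction.mem_stabilizer_iff.mpr hvy⟩
    rw [← hstab] at h1
    exact (Subgroup.mem_inf.mp h1).1
  set A : Set (Equiv.Perm W) := {u | u ∈ Gα ∧ u y ≠ y} with hA
  set B : Set (Equiv.Perm W) := (Gβ : Set (Equiv.Perm W)) with hB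
  have memB : ∀ {v : Equiv.Perm W}, v ∈ B ↔ v ∈ Gβ := fun {v} => Iff.rfl
  have hBmul : ∀ {a b : Equiv.Perm W}, a ∈ B → b ∈ B → a * b ∈ B := by
    intro a b ha hb
    exact memB.mpr (mul_mem (memB.mp ha) (memB.mp hb))
  have hAA : ∀ {a b : Equiv.Perm W}, a ∈ A → b ∈ A → a * b ∈ A ∨ a * b ∈ B := by
    intro a b ha hb
    have hab : a * b ∈ Gα := mul_mem ha.1 hb.1
    by_cases h : (a * b) y = y
    · exact Or.inr (memB.mpr (hcross1 hab h))
    · exact Or.inl ⟨hab, h⟩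
  have hAK : ∀ {a b : Equiv.Perm W}, a ∈ A → b ∈ B → b y = y → a * b ∈ A := by
    intro a b ha hb hby
    refine ⟨mul_mem ha.1 (hcross2 (memB.mp hb) hby), ?_⟩
    rw [Equiv.Perm.mul_apply, hby]
    exact ha.2
  have sem : ∀ {g : Equiv.Perm W} {c : Bool}, AltWord A B y g c →
      (c = false → (g β = β ∨ (¬ OnGeodesic T β (g β) y ∧
          T.dist y β + 1 ≤ T.dist y (g β)))) ∧
      (c = true → (¬ OnGeodesic T α (g β) y ∧
          T.dist y β + 1 ≤ T.dist y (g β))) := by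
    intro g c hgc
    induction hgc with
    | base hg =>
      exact ⟨fun _ => Or.inl (memGβ (memB.mp hg)).2, fun hcc => by simp at hcc⟩
    | @stepA u h hu hh ih =>
      refine ⟨fun hcc => by simp at hcc, fun _ => ?_⟩
      obtain ⟨huG, huα⟩ := memGα hu.1
      have huy : u y ≠ y := hu.2
      have key : OnGeodesic T α (h β) y ∧ T.dist y β ≤ T.dist y (h β) := by
        rcases ih.1 rfl with hβ | ⟨hnot, hd'⟩
        · rw [hβ]; exact ⟨hgeo, le_refl _⟩
        · rcases geodesic_split hT (onGeodesic_symm hgeo) (h β) with h1 | h1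
          · exact absurd h1 hnot
          · exact ⟨h1, by omega⟩
      obtain ⟨hOn, hge⟩ := key
      obtain ⟨hno, hd2⟩ := push_off hT (hdist huG) huα huy hOn
      rw [Equiv.Perm.mul_apply]
      exact ⟨hno, by omega⟩
    | @stepB v h hv hvy hh ih =>
      refine ⟨fun _ => Or.inr ?_, fun hcc => by simp at hcc⟩
      obtain ⟨hvG, hvβ⟩ := memGβ (memB.mp hv)
      obtain ⟨hno1, hge⟩ := ih.2 rfl
      have hOn : OnGeodesic T β (h β) y := by
        rcases geodesic_split hT hgeo (h β) with h1 | h1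
        · exact absurd h1 hno1
        · exact h1
      obtain ⟨hno, hd2⟩ := push_off hT (hdist hvG) hvβ hvy hOn
      rw [Equiv.Perm.mul_apply]
      exact ⟨hno, by omega⟩
    | @stepK v h hv hvy hh ih =>
      refine ⟨fun hcc => by simp at hcc, fun _ => ?_⟩
      obtain ⟨hvG, hvα⟩ := memGα (hcross2 (memB.mp hv) hvy)
      obtain ⟨hno1, hge⟩ := ih.2 rfl
      rw [Equiv.Perm.mul_apply]
      have hdeq : T.dist y (v (h β)) = T.dist y (h β) := by
        conv_lhs => rw [← hvy]
        exact hdist hvG y (h β)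
      constructor
      · intro hcon
        apply hno1
        have h2 : OnGeodesic T (v α) (v (h β)) (v y) := by
          rw [hvα, hvy]; exact hcon
        exact (onGeodesic_perm (hdist hvG)).mp h2
      · omega
  have genAB : ∀ {x : Equiv.Perm W},
      x ∈ ((Gα : Set (Equiv.Perm W)) ∪ (Gβ : Set (Equiv.Perm W))) → x ∈ A ∨ x ∈ B := by
    rintro x (hx | hx)
    · by_cases hxy : x y = y
      · exact Or.inr (memB.mpr (hcross1 hx hxy))
      · exact Or.inl ⟨hx, hxy⟩
    · exact Or.inr (memB.mpr hx)
  have hgen : g ∈ Subgroup.closure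
      ((Gα : Set (Equiv.Perm W)) ∪ (Gβ : Set (Equiv.Perm W))) := by
    rw [Subgroup.closure_union, Subgroup.closure_eq, Subgroup.closure_eq]
    exact hgmem
  have hex : ∀ {x : Equiv.Perm W}, x ∈ Subgroup.closure
      ((Gα : Set (Equiv.Perm W)) ∪ (Gβ : Set (Equiv.Perm W))) →
      ∃ c, AltWord A B y x c := by
    intro x hx
    induction hx using Subgroup.closure_induction_left with
    | one => exact ⟨false, .base (memB.mpr (one_mem Gβ))⟩
    | mul_left x hx z hz ih =>
      obtain ⟨c, hc⟩ := ih
      exact AltWord.mul_left hBmul hAA hAK hc x (genAB hx)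
    | inv_mul_cancel x hx z hz ih =>
      obtain ⟨c, hc⟩ := ih
      have hx' : x⁻¹ ∈ ((Gα : Set (Equiv.Perm W)) ∪ (Gβ : Set (Equiv.Perm W))) := by
        rcases hx with h | h
        · exact Or.inl (inv_mem h)
        · exact Or.inr (inv_mem h)
      exact AltWord.mul_left hBmul hAA hAK hc x⁻¹ (genAB hx')
  obtain ⟨c, hc⟩ := hex hgen
  have hsem := sem hc
  cases c with
  | false =>
    rcases hsem.1 rfl with h1 | ⟨h1, _⟩
    · exact hne (hgβ.symm.trans h1)
    · rw [hgβ] at h1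
      exact h1 (onGeodesic_symm hgeo)
  | true =>
    obtain ⟨_, h2⟩ := hsem.2 rfl
    rw [hgβ] at h2
    omega
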